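/- For coprime integers s,t ≥ 2, (1/2) ∑_{m=1}^{s-1} ∑_{n=1}^{t-1} [ ((ns - mt)² - (s-t)²)/(4st) - (1/24)(1 - 6(s-t)²/(st)) ] = (s-1)(t-1)(st - s - t - 1)/48. -/
import Mathlib


open Finset

lemma sum_quad_aux (A B C : ℚ) : ∀ b : ℕ, ∑ n ∈ Finset.Icc 1 b, (A * (n : ℚ) ^ 2 + B * n + C) =
    A * (b * (b + 1) * (2 * b + 1)) / 6 + B * (b * (b + 1)) / 2 + C * b := by
  intro b
  induction b with
  | zero => simp
  | succ k ih =>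
    rw [Finset.sum_Icc_succ_top (by omega), ih]
    push_cast
    ring

/-- For coprime integers `s,t ≥ 2`,
`(1/2) ∑_{m=1}^{s-1} ∑_{n=1}^{t-1} (h_{s,t}^{m,n} - c_{s,t}/24)
  = (s-1)(t-1)(st - s - t - 1)/48`,
where `h_{s,t}^{m,n} = ((ns-mt)² - (s-t)²)/(4st)` and `c_{s,t} = 1 - 6(s-t)²/(st)`. -/
theorem sum_normalized_weights_general (s t : ℕ) (hs : 2 ≤ s) (ht : 2 ≤ t)
    (hst : Nat.Coprime s t) :
    (1 / 2 : ℚ) * ∑ m ∈ Finset.Icc 1 (s - 1), ∑ n ∈ Finset.Icc 1 (t - 1),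
        ((((n : ℚ) * s - (m : ℚ) * t) ^ 2 - ((s : ℚ) - t) ^ 2) / (4 * s * t) -
          (1 / 24) * (1 - 6 * ((s : ℚ) - t) ^ 2 / ((s : ℚ) * t))) =
      ((s : ℚ) - 1) * ((t : ℚ) - 1) * ((s : ℚ) * t - s - t - 1) / 48 := by
  obtain ⟨a, rfl⟩ : ∃ a, s = a + 2 := ⟨s - 2, by omega⟩
  obtain ⟨b, rfl⟩ : ∃ b, t = b + 2 := ⟨t - 2, by omega⟩
  have hS : (a + 2 : ℕ) - 1 = a + 1 := by omega
  have hT : (b + 2 : ℕ) - 1 = b + 1 := by omega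
  rw [hS, hT]
  set S : ℚ := ((a + 2 : ℕ) : ℚ) with hSdef
  set T : ℚ := ((b + 2 : ℕ) : ℚ) with hTdef
  have hS0 : S ≠ 0 := by
    have : (0:ℚ) < S := by rw [hSdef]; push_cast; positivity
    linarith
  have hT0 : T ≠ 0 := by
    have : (0:ℚ) < T := by rw [hTdef]; push_cast; positivity
    linarith
  have inner : ∀ m : ℕ, ∑ n ∈ Finset.Icc 1 (b + 1),
      ((((n : ℚ) * S - (m : ℚ) * T) ^ 2 - (S - T) ^ 2) / (4 * S * T) -
        (1 / 24) * (1 - 6 * (S - T) ^ 2 / (S * T))) =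
      (S ^ 2 / (4 * S * T)) * ((b+1:ℕ) * ((b+1:ℕ) + 1) * (2 * (b+1:ℕ) + 1)) / 6 +
      (-(2 * (m : ℚ) * T * S) / (4 * S * T)) * ((b+1:ℕ) * ((b+1:ℕ) + 1)) / 2 +
      (((m : ℚ) ^ 2 * T ^ 2 - (S - T) ^ 2) / (4 * S * T) -
        (1 / 24) * (1 - 6 * (S - T) ^ 2 / (S * T))) * (b+1:ℕ) := by
    intro m
    rw [← sum_quad_aux]
    apply Finset.sum_congr rfl
    intro n _
    field_simp
    ring
  rw [Finset.sum_congr rfl (fun m _ => inner m)]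
  have step : ∑ m ∈ Finset.Icc 1 (a + 1),
      (S ^ 2 / (4 * S * T) * ((b+1:ℕ) * ((b+1:ℕ) + 1) * (2 * (b+1:ℕ) + 1)) / 6 +
        -(2 * (m:ℚ) * T * S) / (4 * S * T) * ((b+1:ℕ) * ((b+1:ℕ) + 1)) / 2 +
        (((m:ℚ) ^ 2 * T ^ 2 - (S - T) ^ 2) / (4 * S * T) -
          1 / 24 * (1 - 6 * (S - T) ^ 2 / (S * T))) * (b+1:ℕ)) =
      ∑ m ∈ Finset.Icc 1 (a + 1),
      ((T ^ 2 / (4 * S * T) * (b+1:ℕ)) * (m:ℚ) ^ 2 +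
        (-(2 * T * S) / (4 * S * T) * ((b+1:ℕ) * ((b+1:ℕ) + 1)) / 2) * (m:ℚ) +
        (S ^ 2 / (4 * S * T) * ((b+1:ℕ) * ((b+1:ℕ) + 1) * (2 * (b+1:ℕ) + 1)) / 6 +
          (-(S - T) ^ 2 / (4 * S * T) - 1 / 24 * (1 - 6 * (S - T) ^ 2 / (S * T))) * (b+1:ℕ))) :=
    Finset.sum_congr rfl (fun m _ => by field_simp; ring)
  rw [step, sum_quad_aux]
  rw [hSdef, hTdef]
  push_cast
  have h1 : ((a:ℚ) + 2) ≠ 0 := by positivity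
  have h2 : ((b:ℚ) + 2) ≠ 0 := by positivity
  field_simp
  ring
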